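/- arXiv:2312.14294 — 2 statements merged into one kernel-verified Lean document; each statement's English description precedes it below -/
import Mathlib

section
/- Let (X, 𝒜, μ) be a probability space, U > 0, and let m₁, m₂ : X → ℝ be measurable functions with sup_x |m₁(x)| ≤ U and sup_x |m₂(x)| ≤ U. Define h² = ∫_X ∫_ℝ ( √(p_{m₁}(y,x)) − √(p_{m₂}(y,x)) )² dy dμ(x), where p_m(y,x) = (2π)^{−1/2} exp(−(y − m(x))²/2). Then, with the explicit constant C₂(U) = (1 − e^{−U²/2})/(2U²) > 0, one has C₂(U) · ∫_X (m₁ − m₂)² dμ ≤ h² ≤ (1/4) ∫_X (m₁ − m₂)² dμ. -/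
open MeasureTheory Real

/-- The Gaussian regression density with mean `m`: `y ↦ (2π)^{-1/2} exp(-(y-m)²/2)`. -/
noncomputable def gaussDensity (m y : ℝ) : ℝ :=
  (Real.sqrt (2 * Real.pi))⁻¹ * Real.exp (-(y - m) ^ 2 / 2)

lemma gaussDensity_nonneg (m y : ℝ) : 0 ≤ gaussDensity m y := by
  unfold gaussDensity; positivity

lemma integrable_gaussDensity (m : ℝ) : Integrable (gaussDensity m) := by
  have h0 : Integrable (fun z : ℝ => Real.exp (-(1/2 : ℝ) * z ^ 2)) :=
    integrable_exp_neg_mul_sq (by norm_num : (0:ℝ) < 1/2)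
  have h1 : Integrable (fun y : ℝ => Real.exp (-(1/2 : ℝ) * (y - m) ^ 2)) := h0.comp_sub_right m
  have h : Integrable (fun y : ℝ => (Real.sqrt (2 * Real.pi))⁻¹ *
      Real.exp (-(1/2 : ℝ) * (y - m) ^ 2)) := h1.const_mul _
  have heq : (fun y : ℝ => (Real.sqrt (2 * Real.pi))⁻¹ * Real.exp (-(1/2 : ℝ) * (y - m) ^ 2))
      = gaussDensity m := by
    funext y; unfold gaussDensity; congr 1; ring
  exact heq ▸ h

lemma integral_gaussDensity (m : ℝ) : ∫ y, gaussDensity m y = 1 := by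
  unfold gaussDensity
  rw [integral_const_mul]
  have : ∀ y : ℝ, Real.exp (-(y - m) ^ 2 / 2) = (fun z => Real.exp (-(1/2) * z ^ 2)) (y - m) := by
    intro y; simp only; congr 1; ring
  simp_rw [this]
  rw [integral_sub_right_eq_self (fun z => Real.exp (-(1/2) * z ^ 2)) m,
    integral_gaussian]
  rw [inv_mul_eq_one₀ (by positivity)]
  norm_num
  ring

lemma sqrt_gaussDensity (m y : ℝ) :
    Real.sqrt (gaussDensity m y) =
      Real.sqrt ((Real.sqrt (2 * Real.pi))⁻¹) * Real.exp (-(y - m) ^ 2 / 4) := by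
  unfold gaussDensity
  rw [Real.sqrt_mul (by positivity), ← Real.exp_half]
  congr 1
  ring

lemma cross_integrand_eq (m m' y : ℝ) :
    (Real.sqrt (2 * Real.pi))⁻¹ * Real.exp (-((y - m) ^ 2 + (y - m') ^ 2) / 4) =
      Real.exp (-(m - m') ^ 2 / 8) * gaussDensity ((m + m') / 2) y := by
  unfold gaussDensity
  rw [← mul_assoc, mul_comm (Real.exp _) _, mul_assoc, ← Real.exp_add]
  congr 1
  ring

lemma hellinger_inner (m m' : ℝ) :
    ∫ y, (Real.sqrt (gaussDensity m y) - Real.sqrt (gaussDensity m' y)) ^ 2 =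
      2 - 2 * Real.exp (-(m - m') ^ 2 / 8) := by
  have hpt : ∀ y, (Real.sqrt (gaussDensity m y) - Real.sqrt (gaussDensity m' y)) ^ 2 =
      (gaussDensity m y + gaussDensity m' y) -
        2 * (Real.exp (-(m - m') ^ 2 / 8) * gaussDensity ((m + m') / 2) y) := by
    intro y
    rw [← cross_integrand_eq, sub_sq, Real.sq_sqrt (gaussDensity_nonneg m y),
      Real.sq_sqrt (gaussDensity_nonneg m' y), sqrt_gaussDensity, sqrt_gaussDensity]
    have hs : Real.sqrt ((Real.sqrt (2 * Real.pi))⁻¹) * Real.sqrt ((Real.sqrt (2 * Real.pi))⁻¹)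
        = (Real.sqrt (2 * Real.pi))⁻¹ := Real.mul_self_sqrt (by positivity)
    have hprod : (Real.sqrt ((Real.sqrt (2*Real.pi))⁻¹) * Real.exp (-(y - m) ^ 2 / 4)) *
        (Real.sqrt ((Real.sqrt (2*Real.pi))⁻¹) * Real.exp (-(y - m') ^ 2 / 4)) =
        (Real.sqrt (2 * Real.pi))⁻¹ * Real.exp (-((y - m) ^ 2 + (y - m') ^ 2) / 4) := by
      rw [mul_mul_mul_comm, hs, ← Real.exp_add]
      congr 1
      ring
    linear_combination (-2 : ℝ) * hprod
  simp_rw [hpt]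
  have hint1 : Integrable (fun y => gaussDensity m y + gaussDensity m' y) :=
    (integrable_gaussDensity m).add (integrable_gaussDensity m')
  have hint2 : Integrable (fun y =>
      2 * (Real.exp (-(m - m') ^ 2 / 8) * gaussDensity ((m + m') / 2) y)) :=
    (((integrable_gaussDensity ((m + m') / 2)).const_mul _).const_mul 2)
  rw [integral_sub hint1 hint2, integral_add (integrable_gaussDensity m)
    (integrable_gaussDensity m'), integral_gaussDensity, integral_gaussDensity,
    integral_const_mul, integral_const_mul, integral_gaussDensity]
  ring

lemma scalar_upper (d : ℝ) : 2 - 2 * Real.exp (-d ^ 2 / 8) ≤ d ^ 2 / 4 := by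
  have h := Real.add_one_le_exp (-d ^ 2 / 8)
  linarith

lemma scalar_lower (U d : ℝ) (hU : 0 < U) (hd : d ^ 2 ≤ 4 * U ^ 2) :
    (1 - Real.exp (-U ^ 2 / 2)) / (2 * U ^ 2) * d ^ 2 ≤ 2 - 2 * Real.exp (-d ^ 2 / 8) := by
  have hU2 : (0:ℝ) < U ^ 2 := by positivity
  set t : ℝ := d ^ 2 / 8 with ht
  set T : ℝ := U ^ 2 / 2 with hT
  have hT0 : 0 < T := by positivity
  have ht0 : 0 ≤ t := by positivity
  have htT : t ≤ T := by rw [ht, hT]; linarith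
  have ha : (0:ℝ) ≤ 1 - t / T := by
    have : t / T ≤ 1 := (div_le_one hT0).2 htT
    linarith
  have hb : (0:ℝ) ≤ t / T := by positivity
  have hconv := convexOn_exp.2 (Set.mem_univ (0:ℝ)) (Set.mem_univ (-T)) ha hb
    (by ring : (1 - t / T) + t / T = 1)
  simp only [smul_eq_mul, mul_zero, zero_add, Real.exp_zero, mul_one] at hconv
  rw [show t / T * -T = -t from by field_simp] at hconv
  -- hconv : exp (-t) ≤ (1 - t/T) + t/T * exp (-T)
  have hexp : Real.exp (-d ^ 2 / 8) = Real.exp (-t) := by rw [ht]; congr 1; ring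
  have hexpT : Real.exp (-U ^ 2 / 2) = Real.exp (-T) := by rw [hT]; congr 1; ring
  rw [hexp, hexpT]
  have key : (1 - Real.exp (-T)) / (2 * U ^ 2) * d ^ 2 =
      2 - 2 * ((1 - t / T) + t / T * Real.exp (-T)) := by
    rw [ht, hT]; field_simp; ring
  linarith

/-- On models uniformly bounded by `U`, the squared Hellinger distance in the
random-design Gaussian regression model is equivalent to the squared `L²(μ)` prediction
risk, with explicit constant `C₂(U) = (1 - e^{-U²/2})/(2U²) > 0`:
`C₂(U) ∫ (m₁-m₂)² dμ ≤ h² ≤ (1/4) ∫ (m₁-m₂)² dμ`. -/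
theorem sq_hellinger_equiv_prediction_risk {X : Type*} [MeasurableSpace X]
    (μ : Measure X) [IsProbabilityMeasure μ]
    (U : ℝ) (hU : 0 < U)
    (m₁ m₂ : X → ℝ) (hm₁ : Measurable m₁) (hm₂ : Measurable m₂)
    (hb₁ : ∀ x, |m₁ x| ≤ U) (hb₂ : ∀ x, |m₂ x| ≤ U) :
    0 < (1 - Real.exp (-U ^ 2 / 2)) / (2 * U ^ 2) ∧
    (1 - Real.exp (-U ^ 2 / 2)) / (2 * U ^ 2) * ∫ x, (m₁ x - m₂ x) ^ 2 ∂μ ≤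
      ∫ x, (∫ y, (Real.sqrt (gaussDensity (m₁ x) y) -
        Real.sqrt (gaussDensity (m₂ x) y)) ^ 2) ∂μ ∧
    ∫ x, (∫ y, (Real.sqrt (gaussDensity (m₁ x) y) -
        Real.sqrt (gaussDensity (m₂ x) y)) ^ 2) ∂μ ≤
      (1 / 4) * ∫ x, (m₁ x - m₂ x) ^ 2 ∂μ := by
  set C : ℝ := (1 - Real.exp (-U ^ 2 / 2)) / (2 * U ^ 2) with hC
  have hCpos : 0 < C := by
    apply div_pos _ (by positivity)
    have : Real.exp (-U ^ 2 / 2) < 1 := by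
      rw [Real.exp_lt_one_iff]; nlinarith
    linarith
  have hd : ∀ x, (m₁ x - m₂ x) ^ 2 ≤ 4 * U ^ 2 := by
    intro x
    have h1 := abs_le.1 (hb₁ x)
    have h2 := abs_le.1 (hb₂ x)
    nlinarith
  have hmeas : Measurable fun x => (m₁ x - m₂ x) ^ 2 := (hm₁.sub hm₂).pow_const 2
  have hd2int : Integrable (fun x => (m₁ x - m₂ x) ^ 2) μ := by
    refine Integrable.mono' (integrable_const (4 * U ^ 2)) hmeas.aestronglyMeasurable
      (Filter.Eventually.of_forall fun x => ?_)
    rw [Real.norm_eq_abs, abs_of_nonneg (sq_nonneg _)]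
    exact hd x
  have hrw : (fun x => (∫ y, (Real.sqrt (gaussDensity (m₁ x) y) -
      Real.sqrt (gaussDensity (m₂ x) y)) ^ 2)) =
      fun x => 2 - 2 * Real.exp (-(m₁ x - m₂ x) ^ 2 / 8) := by
    funext x; exact hellinger_inner (m₁ x) (m₂ x)
  have hfmeas : Measurable fun x => 2 - 2 * Real.exp (-(m₁ x - m₂ x) ^ 2 / 8) := by
    exact (measurable_const.sub ((Real.measurable_exp.comp
      ((hmeas.neg).div_const 8)).const_mul 2))
  have hfint : Integrable (fun x => 2 - 2 * Real.exp (-(m₁ x - m₂ x) ^ 2 / 8)) μ := by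
    refine Integrable.mono' (integrable_const 2) hfmeas.aestronglyMeasurable
      (Filter.Eventually.of_forall fun x => ?_)
    rw [Real.norm_eq_abs, abs_of_nonneg]
    · have := Real.exp_pos (-(m₁ x - m₂ x) ^ 2 / 8); linarith
    · have h0 : (0:ℝ) ≤ (m₁ x - m₂ x) ^ 2 / 8 := by positivity
      have : Real.exp (-(m₁ x - m₂ x) ^ 2 / 8) ≤ 1 := Real.exp_le_one_iff.2 (by linarith)
      linarith
  rw [hrw]
  refine ⟨hCpos, ?_, ?_⟩
  · rw [← integral_const_mul]
    exact integral_mono (hd2int.const_mul C) hfint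
      (fun x => scalar_lower U (m₁ x - m₂ x) hU (hd x))
  · rw [← integral_const_mul]
    refine integral_mono hfint (hd2int.const_mul _) (fun x => ?_)
    have := scalar_upper (m₁ x - m₂ x)
    linarith
end

section
/- Let (X, 𝒜, μ) be a probability space, U > 0, and let m₁, m₂ : X → ℝ be measurable functions with sup_x |m₁(x)| ≤ U and sup_x |m₂(x)| ≤ U. Set c_U = (1 + U²)^{−1/2}. Define K = ∫_X ∫_ℝ p_{m₁} log(p_{m₁}/p_{m₂}) dy dμ(x) and V = ∫_X ∫_ℝ p_{m₁} (log(p_{m₁}/p_{m₂}))² dy dμ(x), where p_m(y,x) = (2π)^{−1/2} exp(−(y − m(x))²/2). Then for every ε > 0: if ( ∫_X (m₁ − m₂)² dμ )^{1/2} ≤ c_U · ε, then K ≤ ε² and V ≤ ε². -/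
open MeasureTheory

open Real

lemma gaussAux_exp_eq (z : ℝ) : -(1/2 : ℝ) * z ^ 2 = -z ^ 2 / 2 := by ring

lemma int_exp : Integrable (fun z : ℝ => Real.exp (-z ^ 2 / 2)) := by
  have h := integrable_exp_neg_mul_sq (by norm_num : (0:ℝ) < 1/2)
  exact h.congr (Filter.Eventually.of_forall fun z => by simp only [gaussAux_exp_eq])

lemma int_mul_exp : Integrable (fun z : ℝ => z * Real.exp (-z ^ 2 / 2)) := by
  have h := integrable_mul_exp_neg_mul_sq (by norm_num : (0:ℝ) < 1/2)
  exact h.congr (Filter.Eventually.of_forall fun z => by simp only [gaussAux_exp_eq])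

lemma int_sq_mul_exp : Integrable (fun z : ℝ => z ^ 2 * Real.exp (-z ^ 2 / 2)) := by
  have h := integrable_rpow_mul_exp_neg_mul_sq (by norm_num : (0:ℝ) < 1/2)
    (by norm_num : (-1:ℝ) < 2)
  refine h.congr (Filter.Eventually.of_forall fun z => ?_)
  simp only [Real.rpow_two, gaussAux_exp_eq]

lemma integral_exp_gauss : ∫ z : ℝ, Real.exp (-z ^ 2 / 2) = Real.sqrt (2 * Real.pi) := by
  have h := integral_gaussian (1/2 : ℝ)
  simp only [gaussAux_exp_eq] at h
  rw [h]
  norm_num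
  rw [mul_comm]

lemma integral_mul_exp_gauss : ∫ z : ℝ, z * Real.exp (-z ^ 2 / 2) = 0 := by
  have h := MeasureTheory.integral_neg_eq_self (fun z : ℝ => z * Real.exp (-z ^ 2 / 2)) volume
  simp only [neg_sq, neg_mul] at h
  rw [integral_neg] at h
  linarith

lemma integral_sq_mul_exp_gauss :
    ∫ z : ℝ, z ^ 2 * Real.exp (-z ^ 2 / 2) = Real.sqrt (2 * Real.pi) := by
  have hderiv : ∀ z : ℝ, HasDerivAt (fun z : ℝ => -z * Real.exp (-z ^ 2 / 2))
      (z ^ 2 * Real.exp (-z ^ 2 / 2) - Real.exp (-z ^ 2 / 2)) z := by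
    intro z
    have h1 : HasDerivAt (fun z : ℝ => -z ^ 2 / 2) (-z) z := by
      have := ((hasDerivAt_pow 2 z).neg).div_const 2
      exact this.congr_deriv (by push_cast; ring)
    have h2 : HasDerivAt (fun z : ℝ => Real.exp (-z ^ 2 / 2)) (Real.exp (-z ^ 2 / 2) * (-z)) z :=
      (Real.hasDerivAt_exp _).comp z h1
    have h3 := ((hasDerivAt_id z).neg).mul h2
    exact h3.congr_deriv (by simp only [Pi.neg_apply, id_eq]; ring)
  have hf : Integrable (fun z : ℝ => -z * Real.exp (-z ^ 2 / 2)) :=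
    int_mul_exp.neg.congr (Filter.Eventually.of_forall fun z => by simp only [Pi.neg_apply]; ring)
  have hf' : Integrable (fun z : ℝ =>
      z ^ 2 * Real.exp (-z ^ 2 / 2) - Real.exp (-z ^ 2 / 2)) := int_sq_mul_exp.sub int_exp
  have h := integral_eq_zero_of_hasDerivAt_of_integrable hderiv hf' hf
  rw [integral_sub int_sq_mul_exp int_exp, integral_exp_gauss] at h
  linarith

lemma log_ratio (m₁ m₂ y : ℝ) :
    Real.log (gaussDensity m₁ y / gaussDensity m₂ y)
      = (m₁ - m₂) * (y - m₁) + (m₁ - m₂) ^ 2 / 2 := by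
  unfold gaussDensity
  rw [mul_div_mul_left _ _ (by positivity : (Real.sqrt (2 * Real.pi))⁻¹ ≠ 0),
    ← Real.exp_sub, Real.log_exp]
  ring

lemma inner_integral_pow (m₁ m₂ : ℝ) (k : ℕ) :
    (∫ y : ℝ, gaussDensity m₁ y *
        (Real.log (gaussDensity m₁ y / gaussDensity m₂ y)) ^ k)
      = (Real.sqrt (2 * Real.pi))⁻¹ *
        ∫ z : ℝ, Real.exp (-z ^ 2 / 2) * ((m₁ - m₂) * z + (m₁ - m₂) ^ 2 / 2) ^ k := by
  have h : ∀ y : ℝ, gaussDensity m₁ y *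
        (Real.log (gaussDensity m₁ y / gaussDensity m₂ y)) ^ k
      = (fun z : ℝ => (Real.sqrt (2 * Real.pi))⁻¹ *
          (Real.exp (-z ^ 2 / 2) * ((m₁ - m₂) * z + (m₁ - m₂) ^ 2 / 2) ^ k)) (y - m₁) := by
    intro y
    rw [log_ratio]
    simp only [gaussDensity]
    ring_nf
  simp_rw [h]
  rw [integral_sub_right_eq_self
    (fun z : ℝ => (Real.sqrt (2 * Real.pi))⁻¹ *
      (Real.exp (-z ^ 2 / 2) * ((m₁ - m₂) * z + (m₁ - m₂) ^ 2 / 2) ^ k)) m₁,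
    integral_const_mul]

lemma KL_inner (m₁ m₂ : ℝ) :
    (∫ y : ℝ, gaussDensity m₁ y * Real.log (gaussDensity m₁ y / gaussDensity m₂ y))
      = (m₁ - m₂) ^ 2 / 2 := by
  have h := inner_integral_pow m₁ m₂ 1
  simp only [pow_one] at h
  rw [h]
  set a := m₁ - m₂ with ha
  have hsplit : ∀ z : ℝ, Real.exp (-z ^ 2 / 2) * (a * z + a ^ 2 / 2)
      = a * (z * Real.exp (-z ^ 2 / 2)) + (a ^ 2 / 2) * Real.exp (-z ^ 2 / 2) := fun z => by ring
  simp_rw [hsplit]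
  rw [integral_add (int_mul_exp.const_mul _) (int_exp.const_mul _),
    integral_const_mul, integral_const_mul, integral_mul_exp_gauss, integral_exp_gauss]
  have h2 : (0:ℝ) < Real.sqrt (2 * Real.pi) := Real.sqrt_pos.mpr (by positivity)
  field_simp
  ring

lemma V_inner (m₁ m₂ : ℝ) :
    (∫ y : ℝ, gaussDensity m₁ y * (Real.log (gaussDensity m₁ y / gaussDensity m₂ y)) ^ 2)
      = (m₁ - m₂) ^ 2 + (m₁ - m₂) ^ 4 / 4 := by
  have h := inner_integral_pow m₁ m₂ 2
  rw [h]
  set a := m₁ - m₂ with ha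
  have hsplit : ∀ z : ℝ, Real.exp (-z ^ 2 / 2) * (a * z + a ^ 2 / 2) ^ 2
      = a ^ 2 * (z ^ 2 * Real.exp (-z ^ 2 / 2)) + (a ^ 3 * (z * Real.exp (-z ^ 2 / 2))
        + (a ^ 4 / 4) * Real.exp (-z ^ 2 / 2)) := fun z => by ring
  simp_rw [hsplit]
  have hg : Integrable (fun z : ℝ => a ^ 3 * (z * Real.exp (-z ^ 2 / 2))
      + (a ^ 4 / 4) * Real.exp (-z ^ 2 / 2)) :=
    Integrable.add (int_mul_exp.const_mul _) (int_exp.const_mul _)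
  rw [integral_add (int_sq_mul_exp.const_mul _) hg,
    integral_add (int_mul_exp.const_mul _) (int_exp.const_mul _),
    integral_const_mul, integral_const_mul, integral_const_mul,
    integral_mul_exp_gauss, integral_exp_gauss, integral_sq_mul_exp_gauss]
  have h2 : (0:ℝ) < Real.sqrt (2 * Real.pi) := Real.sqrt_pos.mpr (by positivity)
  field_simp
  ring

/-- On models uniformly bounded by `U`, the Kullback–Leibler neighbourhood
`𝓑₂(P_{m₁}, ε)` contains the `L²(μ)`-prediction-risk ball of radius `c_U ε` around `m₁`,
where `c_U = (1 + U²)^{-1/2}`: if `‖m₁ - m₂‖_{L²(μ)} ≤ c_U ε` then both the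
Kullback–Leibler divergence and the Kullback–Leibler variation are at most `ε²`. -/
theorem KL_neighbourhood_contains_prediction_ball {X : Type*} [MeasurableSpace X]
    (μ : Measure X) [IsProbabilityMeasure μ]
    (U : ℝ) (hU : 0 < U)
    (m₁ m₂ : X → ℝ) (hm₁ : Measurable m₁) (hm₂ : Measurable m₂)
    (hb₁ : ∀ x, |m₁ x| ≤ U) (hb₂ : ∀ x, |m₂ x| ≤ U) :
    ∀ ε : ℝ, 0 < ε →
      Real.sqrt (∫ x, (m₁ x - m₂ x) ^ 2 ∂μ) ≤ (Real.sqrt (1 + U ^ 2))⁻¹ * ε →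
      (∫ x, (∫ y, gaussDensity (m₁ x) y *
          Real.log (gaussDensity (m₁ x) y / gaussDensity (m₂ x) y)) ∂μ ≤ ε ^ 2 ∧
       ∫ x, (∫ y, gaussDensity (m₁ x) y *
          (Real.log (gaussDensity (m₁ x) y / gaussDensity (m₂ x) y)) ^ 2) ∂μ ≤ ε ^ 2) := by
  intro ε hε hball
  have habs : ∀ x, (m₁ x - m₂ x) ^ 2 ≤ 4 * U ^ 2 := by
    intro x
    have h1 := hb₁ x
    have h2 := hb₂ x
    have h3 : |m₁ x - m₂ x| ≤ 2 * U := by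
      calc |m₁ x - m₂ x| ≤ |m₁ x| + |m₂ x| := abs_sub _ _
        _ ≤ 2 * U := by linarith
    nlinarith [abs_nonneg (m₁ x - m₂ x), sq_abs (m₁ x - m₂ x)]
  have hameas : Measurable fun x => (m₁ x - m₂ x) ^ 2 := (hm₁.sub hm₂).pow_const 2
  have hint : Integrable (fun x => (m₁ x - m₂ x) ^ 2) μ := by
    refine Integrable.mono' (integrable_const (4 * U ^ 2)) hameas.aestronglyMeasurable ?_
    exact Filter.Eventually.of_forall fun x => by
      rw [Real.norm_eq_abs, abs_of_nonneg (sq_nonneg _)]; exact habs x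
  have hUpos : (0:ℝ) < 1 + U ^ 2 := by positivity
  have hI0 : 0 ≤ ∫ x, (m₁ x - m₂ x) ^ 2 ∂μ := integral_nonneg fun x => sq_nonneg _
  have hA : ∫ x, (m₁ x - m₂ x) ^ 2 ∂μ ≤ ε ^ 2 / (1 + U ^ 2) := by
    have h1 : (∫ x, (m₁ x - m₂ x) ^ 2 ∂μ)
        = (Real.sqrt (∫ x, (m₁ x - m₂ x) ^ 2 ∂μ)) ^ 2 := (Real.sq_sqrt hI0).symm
    have h2 : (Real.sqrt (∫ x, (m₁ x - m₂ x) ^ 2 ∂μ)) ^ 2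
        ≤ ((Real.sqrt (1 + U ^ 2))⁻¹ * ε) ^ 2 :=
      pow_le_pow_left₀ (Real.sqrt_nonneg _) hball 2
    have h3 : ((Real.sqrt (1 + U ^ 2))⁻¹ * ε) ^ 2 = ε ^ 2 / (1 + U ^ 2) := by
      rw [mul_pow, inv_pow, Real.sq_sqrt hUpos.le]
      ring
    linarith
  constructor
  · have hK : (∫ x, (∫ y, gaussDensity (m₁ x) y *
        Real.log (gaussDensity (m₁ x) y / gaussDensity (m₂ x) y)) ∂μ)
        = ∫ x, (m₁ x - m₂ x) ^ 2 / 2 ∂μ :=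
      integral_congr_ae (Filter.Eventually.of_forall fun x => KL_inner _ _)
    rw [hK, integral_div]
    have hle : ε ^ 2 / (1 + U ^ 2) ≤ ε ^ 2 :=
      div_le_self (sq_nonneg _) (by nlinarith)
    linarith
  · have hV : (∫ x, (∫ y, gaussDensity (m₁ x) y *
        (Real.log (gaussDensity (m₁ x) y / gaussDensity (m₂ x) y)) ^ 2) ∂μ)
        = ∫ x, ((m₁ x - m₂ x) ^ 2 + (m₁ x - m₂ x) ^ 4 / 4) ∂μ :=
      integral_congr_ae (Filter.Eventually.of_forall fun x => V_inner _ _)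
    rw [hV]
    have hint2 : Integrable (fun x => (m₁ x - m₂ x) ^ 2 + (m₁ x - m₂ x) ^ 4 / 4) μ := by
      refine Integrable.mono' (integrable_const (4 * U ^ 2 + (4 * U ^ 2) ^ 2 / 4))
        ((hameas.add ((((hm₁.sub hm₂).pow_const 4)).div_const 4)).aestronglyMeasurable) ?_
      refine Filter.Eventually.of_forall fun x => ?_
      have h1 := habs x
      have h2 : (m₁ x - m₂ x) ^ 4 = ((m₁ x - m₂ x) ^ 2) ^ 2 := by ring
      rw [Real.norm_eq_abs, abs_of_nonneg (by positivity)]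
      nlinarith [sq_nonneg (m₁ x - m₂ x)]
    have hmono : ∫ x, ((m₁ x - m₂ x) ^ 2 + (m₁ x - m₂ x) ^ 4 / 4) ∂μ
        ≤ ∫ x, (1 + U ^ 2) * (m₁ x - m₂ x) ^ 2 ∂μ := by
      refine integral_mono hint2 (hint.const_mul _) fun x => ?_
      have h1 := habs x
      nlinarith [sq_nonneg (m₁ x - m₂ x)]
    rw [integral_const_mul] at hmono
    have : (1 + U ^ 2) * ∫ x, (m₁ x - m₂ x) ^ 2 ∂μ ≤ ε ^ 2 := by
      have := mul_le_mul_of_nonneg_left hA hUpos.le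
      rwa [mul_div_cancel₀ _ (ne_of_gt hUpos)] at this
    linarith
end
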